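/- For any N unit vectors f₁,...,f_N in C^{M} with N ≥ M, the minimum pairwise chordal distance satisfies min_{k≠l} √(1 − |f_k* f_l|²) ≤ √(N(M−1)/(M(N−1))) (Rankin bound for complex line packings). -/

import Mathlib

open BigOperators

/-- Rankin bound for complex line packings: among any N ≥ M unit vectors in ℂ^M,
some pair has chordal distance at most √(N(M−1)/(M(N−1))). -/
theorem rankin_bound_lines (N M : ℕ) (hN : 1 < N) (hM : 0 < M) (hMN : M ≤ N)
    (f : Fin N → Fin M → ℂ)
    (hf : ∀ k, ∑ i, ‖f k i‖ ^ 2 = 1) :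
    ∃ k l : Fin N, k ≠ l ∧
      Real.sqrt (1 - ‖∑ i, (starRingEnd ℂ) (f k i) * f l i‖ ^ 2)
        ≤ Real.sqrt ((N : ℝ) * ((M : ℝ) - 1) / ((M : ℝ) * ((N : ℝ) - 1))) := by
  classical
  set A : Fin N → Fin N → ℂ := fun k l => ∑ i, (starRingEnd ℂ) (f k i) * f l i with hA
  set S : Fin M → Fin M → ℂ := fun i j => ∑ k, f k i * (starRingEnd ℂ) (f k j) with hS
  have hdiagS : ∀ i, (S i i : ℂ) = ((∑ k, Complex.normSq (f k i) : ℝ) : ℂ) := by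
    intro i
    simp only [hS, Complex.mul_conj]
    push_cast
    rfl
  have htr : ∑ i, (S i i).re = (N : ℝ) := by
    have : ∑ i, (S i i).re = ∑ i, ∑ k, Complex.normSq (f k i) := by
      refine Finset.sum_congr rfl fun i _ => ?_
      rw [hdiagS i, Complex.ofReal_re]
    rw [this, Finset.sum_comm]
    have : ∀ k : Fin N, ∑ i, Complex.normSq (f k i) = 1 := by
      intro k
      rw [← hf k]
      exact Finset.sum_congr rfl fun i _ => (Complex.sq_norm _).symm
    simp [this]
  have comm4 : ∀ (T : Fin N → Fin N → Fin M → Fin M → ℂ),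
      ∑ k, ∑ l, ∑ i, ∑ j, T k l i j = ∑ i, ∑ j, ∑ k, ∑ l, T k l i j := by
    intro T
    calc ∑ k, ∑ l, ∑ i, ∑ j, T k l i j
        = ∑ k, ∑ i, ∑ l, ∑ j, T k l i j :=
          Finset.sum_congr rfl fun k _ => Finset.sum_comm
      _ = ∑ i, ∑ k, ∑ l, ∑ j, T k l i j := Finset.sum_comm
      _ = ∑ i, ∑ k, ∑ j, ∑ l, T k l i j :=
          Finset.sum_congr rfl fun i _ => Finset.sum_congr rfl fun k _ => Finset.sum_comm
      _ = ∑ i, ∑ j, ∑ k, ∑ l, T k l i j :=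
          Finset.sum_congr rfl fun i _ => Finset.sum_comm
  -- key identity
  have key : ∑ k, ∑ l, Complex.normSq (A k l) = ∑ i, ∑ j, Complex.normSq (S i j) := by
    have : ((∑ k, ∑ l, Complex.normSq (A k l) : ℝ) : ℂ)
        = ((∑ i, ∑ j, Complex.normSq (S i j) : ℝ) : ℂ) := by
      push_cast
      simp only [← Complex.mul_conj]
      calc ∑ k, ∑ l, A k l * (starRingEnd ℂ) (A k l)
          = ∑ k, ∑ l, ∑ i, ∑ j,
              (starRingEnd ℂ) (f k i) * f l i * (f k j * (starRingEnd ℂ) (f l j)) := by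
            refine Finset.sum_congr rfl fun k _ => Finset.sum_congr rfl fun l _ => ?_
            simp only [hA, map_sum, map_mul, RingHomCompTriple.comp_apply, Complex.conj_conj,
              RingHom.id_apply, Finset.sum_mul_sum]
        _ = ∑ i, ∑ j, ∑ k, ∑ l,
              (starRingEnd ℂ) (f k i) * f l i * (f k j * (starRingEnd ℂ) (f l j)) := by
            exact comm4 _
        _ = ∑ i, ∑ j, S i j * (starRingEnd ℂ) (S i j) := by
            refine Finset.sum_congr rfl fun i _ => Finset.sum_congr rfl fun j _ => ?_
            simp only [hS, map_sum, map_mul, Complex.conj_conj, Finset.sum_mul_sum]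
            rw [Finset.sum_comm]
            refine Finset.sum_congr rfl fun k _ => Finset.sum_congr rfl fun l _ => ?_
            ring
    exact_mod_cast this
  have hM1 : (1:ℝ) ≤ (M:ℝ) := by exact_mod_cast hM
  have hN1 : (1:ℝ) < (N:ℝ) := by exact_mod_cast hN
  have hMne : (M:ℝ) ≠ 0 := by positivity
  have hN1ne : (N:ℝ) - 1 ≠ 0 := by linarith
  have hAdiag : ∀ k, Complex.normSq (A k k) = 1 := by
    intro k
    have hAval : A k k = 1 := by
      have : ∀ i, (starRingEnd ℂ) (f k i) * f k i = ((‖f k i‖ ^ 2 : ℝ) : ℂ) := by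
        intro i
        rw [Complex.sq_norm, mul_comm, Complex.mul_conj]
      simp only [hA, this]
      rw [← Complex.ofReal_sum, hf k, Complex.ofReal_one]
    rw [hAval]; simp
  -- Welch bound
  have welch : (N:ℝ)^2 / (M:ℝ) ≤ ∑ k, ∑ l, Complex.normSq (A k l) := by
    rw [key]
    have h1 : ∑ i, ((S i i).re)^2 ≤ ∑ i, ∑ j, Complex.normSq (S i j) := by
      refine Finset.sum_le_sum fun i _ => ?_
      have : Complex.normSq (S i i) = ((S i i).re)^2 := by
        rw [hdiagS i, Complex.normSq_ofReal, Complex.ofReal_re, sq]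
      rw [← this]
      exact Finset.single_le_sum (f := fun j => Complex.normSq (S i j))
        (fun j _ => Complex.normSq_nonneg _) (Finset.mem_univ i)
    have h2 : ((N:ℝ))^2 ≤ (M:ℝ) * ∑ i, ((S i i).re)^2 := by
      have := sq_sum_le_card_mul_sum_sq (s := (Finset.univ : Finset (Fin M)))
        (f := fun i => (S i i).re)
      rw [htr] at this
      simpa using this
    rw [div_le_iff₀ (by positivity)]
    have h3 : (0:ℝ) ≤ ∑ i, ∑ j, Complex.normSq (S i j) :=
      Finset.sum_nonneg fun i _ => Finset.sum_nonneg fun j _ => Complex.normSq_nonneg (S i j)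
    nlinarith [h1, h2, h3]
  -- contradiction argument
  by_contra hcon
  push_neg at hcon
  set d : ℝ := ((N:ℝ) - (M:ℝ)) / ((M:ℝ) * ((N:ℝ) - 1)) with hd
  have hcd : 1 - d = (N : ℝ) * ((M : ℝ) - 1) / ((M : ℝ) * ((N : ℝ) - 1)) := by
    rw [hd]; field_simp; ring
  have hall : ∀ k l : Fin N, k ≠ l → Complex.normSq (A k l) < d := by
    intro k l hkl
    have h1 := hcon k l hkl
    by_contra h2
    push_neg at h2
    have h3 : 1 - Complex.normSq (A k l) ≤ (N : ℝ) * ((M : ℝ) - 1) / ((M : ℝ) * ((N : ℝ) - 1)) := by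
      rw [← hcd]; linarith
    have h4 : 1 - (‖A k l‖)^2 ≤ (N : ℝ) * ((M : ℝ) - 1) / ((M : ℝ) * ((N : ℝ) - 1)) := by
      rwa [Complex.sq_norm]
    exact absurd (Real.sqrt_le_sqrt h4) (not_le.mpr h1)
  have card_erase : ∀ k : Fin N, ((Finset.univ.erase k).card : ℝ) = (N:ℝ) - 1 := by
    intro k
    rw [Finset.card_erase_of_mem (Finset.mem_univ k)]
    simp only [Finset.card_univ, Fintype.card_fin]
    rw [Nat.cast_sub (le_of_lt hN)]
    simp
  have sum_off : ∀ k : Fin N, ∑ l ∈ Finset.univ.erase k, Complex.normSq (A k l)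
      < ((N:ℝ) - 1) * d := by
    intro k
    have hne : (Finset.univ.erase k).Nonempty := by
      rw [← Finset.card_pos]
      have : (0:ℝ) < ((Finset.univ.erase k).card : ℝ) := by rw [card_erase k]; linarith
      exact_mod_cast this
    calc ∑ l ∈ Finset.univ.erase k, Complex.normSq (A k l)
        < ∑ _l ∈ Finset.univ.erase k, d := by
          refine Finset.sum_lt_sum_of_nonempty hne fun l hl => ?_
          exact hall k l (Finset.ne_of_mem_erase hl).symm
      _ = ((N:ℝ) - 1) * d := by
          rw [Finset.sum_const, nsmul_eq_mul, card_erase k]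
  have total_lt : ∑ k, ∑ l, Complex.normSq (A k l) < (N:ℝ)^2 / (M:ℝ) := by
    have hrow : ∀ k : Fin N, ∑ l, Complex.normSq (A k l) < 1 + ((N:ℝ) - 1) * d := by
      intro k
      rw [← Finset.add_sum_erase _ _ (Finset.mem_univ k), hAdiag k]
      exact add_lt_add_right (sum_off k) 1
    haveI : Nonempty (Fin N) := Fin.pos_iff_nonempty.mp (by omega)
    calc ∑ k, ∑ l, Complex.normSq (A k l)
        < ∑ _k : Fin N, (1 + ((N:ℝ) - 1) * d) :=
          Finset.sum_lt_sum_of_nonempty Finset.univ_nonempty (fun k _ => hrow k)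
      _ = (N:ℝ) * (1 + ((N:ℝ) - 1) * d) := by
          rw [Finset.sum_const, nsmul_eq_mul, Finset.card_univ, Fintype.card_fin]
      _ = (N:ℝ)^2 / (M:ℝ) := by
          rw [hd]; field_simp; ring
  linarith [welch, total_lt]
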